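/- Given a triple (θ, φ, χ) ∈ Aut(N) × Aut(H) × {maps H → N with χ(1)=1} satisfying μ(φ(x),φ(y))·θ(μ(x,y))⁻¹ = (χ(x)⁻¹)^{t(φ(y))}·χ(y)⁻¹·χ(xy) and θ(n^{t(x)}) = θ(n)^{t(φ(x))} for all x, y ∈ H, n ∈ N, the map γ defined by γ(t(x)·n) = t(φ(x))·χ(x)·θ(n) is an automorphism of G with γ(N) = N, restricting to θ on N and inducing φ on H. -/
import Mathlib

private lemma comm_aux {M : Type*} [CommGroup M] (A B C D E F : M) :
    E * (F * B * D) = A⁻¹ * C⁻¹ * E * F * A * B * (C * D) := by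
  have h : A⁻¹ * C⁻¹ * E * F * A * B * (C * D)
      = (A⁻¹ * A) * ((C⁻¹ * C) * (E * (F * B * D))) := by
    simp only [mul_comm, mul_left_comm, mul_assoc]
  rw [h]; simp

/-- Given a triple (θ, φ, χ) ∈ Aut(N) × Aut(H) × {χ : H → N, χ(1)=1}
satisfying the twisted coboundary identity and the compatibility condition
θ(n^{t(x)}) = θ(n)^{t(φ(x))}, the map γ(t(x)·n) = t(φ(x))·χ(x)·θ(n) is an
automorphism of G normalizing N, restricting to θ on N and inducing φ on H. -/
theorem stmt_3 {G : Type*} [Group G] (N : Subgroup G) [N.Normal]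
    (hcomm : ∀ a b : N, a * b = b * a)
    (t : G ⧸ N → G) (ht : ∀ x : G ⧸ N, (QuotientGroup.mk (t x) : G ⧸ N) = x)
    (ht1 : t 1 = 1)
    (μ : G ⧸ N → G ⧸ N → N)
    (hμ : ∀ x y : G ⧸ N, t (x * y) * (μ x y : G) = t x * t y)
    (θ : N ≃* N) (φ : G ⧸ N ≃* G ⧸ N) (χ : G ⧸ N → N) (hχ1 : χ 1 = 1)
    (hcompat : ∀ (n m : N) (x : G ⧸ N),
      (n : G) = (t x)⁻¹ * (m : G) * t x →
        (θ n : G) = (t (φ x))⁻¹ * (θ m : G) * t (φ x))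
    (hcob : ∀ x y : G ⧸ N,
      (μ (φ x) (φ y) : G) * ((θ (μ x y) : G))⁻¹ =
        ((t (φ y))⁻¹ * ((χ x : G))⁻¹ * t (φ y)) * ((χ y : G))⁻¹ * (χ (x * y) : G)) :
    ∃ γ : G ≃* G,
      (∀ n : N, γ n = θ n) ∧
      (∀ n ∈ N, γ n ∈ N) ∧
      (∀ g : G, (QuotientGroup.mk (γ g) : G ⧸ N) = φ (QuotientGroup.mk g)) ∧
      ∀ (x : G ⧸ N) (n : N), γ (t x * n) = t (φ x) * (χ x : G) * (θ n : G) := by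
  classical
  letI : CommGroup N := { (inferInstance : Group N) with mul_comm := hcomm }
  have hmem : ∀ g : G, (t (QuotientGroup.mk g))⁻¹ * g ∈ N := by
    intro g
    exact QuotientGroup.eq.mp (ht (QuotientGroup.mk g))
  obtain ⟨f, hfdef⟩ : ∃ f : G → G, ∀ g : G,
      f g = t (φ (QuotientGroup.mk g)) *
        ((χ (QuotientGroup.mk g) : G) *
          (θ ⟨(t (QuotientGroup.mk g))⁻¹ * g, hmem g⟩ : G)) := ⟨_, fun _ => rfl⟩
  have hmkn : ∀ n : N, (QuotientGroup.mk (n : G) : G ⧸ N) = 1 :=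
    fun n => (QuotientGroup.eq_one_iff _).mpr n.2
  have hmk : ∀ (x : G ⧸ N) (n : N), (QuotientGroup.mk (t x * (n : G)) : G ⧸ N) = x := by
    intro x n
    rw [QuotientGroup.mk_mul, hmkn, mul_one, ht]
  have hfval : ∀ (x : G ⧸ N) (n : N),
      f (t x * (n : G)) = t (φ x) * ((χ x : G) * (θ n : G)) := by
    intro x n
    have h1 : (QuotientGroup.mk (t x * (n : G)) : G ⧸ N) = x := hmk x n
    have h2 : (⟨(t (QuotientGroup.mk (t x * (n : G))))⁻¹ * (t x * (n : G)),
        hmem (t x * (n : G))⟩ : N) = n := by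
      apply Subtype.ext
      show (t (QuotientGroup.mk (t x * (n : G))))⁻¹ * (t x * (n : G)) = (n : G)
      rw [h1]; group
    rw [hfdef, h2, h1]
  have hdecomp : ∀ g : G,
      g = t (QuotientGroup.mk g) * ((⟨(t (QuotientGroup.mk g))⁻¹ * g, hmem g⟩ : N) : G) := by
    intro g
    simp
  -- key multiplicativity on decomposed elements
  have key : ∀ (x y : G ⧸ N) (n m : N),
      f ((t x * (n : G)) * (t y * (m : G))) = f (t x * (n : G)) * f (t y * (m : G)) := by
    intro x y n m
    have hn' : (t y)⁻¹ * (n : G) * t y ∈ N := by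
      have := Subgroup.Normal.conj_mem ‹N.Normal› (n : G) n.2 (t y)⁻¹
      simpa using this
    set n' : N := ⟨(t y)⁻¹ * (n : G) * t y, hn'⟩ with hn'def
    have hprod : (t x * (n : G)) * (t y * (m : G))
        = t (x * y) * ((μ x y * n' * m : N) : G) := by
      have hh := hμ x y
      push_cast
      rw [show t (x * y) * ((μ x y : G) * ((t y)⁻¹ * (n : G) * t y) * (m : G))
          = (t (x * y) * (μ x y : G)) * ((t y)⁻¹ * (n : G) * t y) * (m : G) by group, hh]
      group
    rw [hprod, hfval, hfval, hfval]
    -- abbreviations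
    have hA : (t (φ y))⁻¹ * ((χ x : G)) * t (φ y) ∈ N := by
      have := Subgroup.Normal.conj_mem ‹N.Normal› ((χ x : G)) (χ x).2 (t (φ y))⁻¹
      simpa using this
    set A : N := ⟨(t (φ y))⁻¹ * ((χ x : G)) * t (φ y), hA⟩ with hAdef
    have hB : (θ n' : G) = (t (φ y))⁻¹ * (θ n : G) * t (φ y) := hcompat n' n y rfl
    have hP : (μ (φ x) (φ y) : G)
        = ((A : G))⁻¹ * ((χ y : G))⁻¹ * (χ (x * y) : G) * (θ (μ x y) : G) := by
      have := hcob x y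
      rw [hAdef]
      push_cast
      rw [show ((t (φ y))⁻¹ * (χ x : G) * t (φ y))⁻¹ * ((χ y : G))⁻¹ * (χ (x * y) : G)
            * (θ (μ x y) : G)
          = (((t (φ y))⁻¹ * ((χ x : G))⁻¹ * t (φ y)) * ((χ y : G))⁻¹ * (χ (x * y) : G))
            * (θ (μ x y) : G) by group, ← this]
      group
    have hw : t (φ (x * y)) * (μ (φ x) (φ y) : G) = t (φ x) * t (φ y) := by
      rw [map_mul]; exact hμ (φ x) (φ y)
    -- commutative-group identity inside N
    have keyN : χ (x * y) * θ (μ x y * n' * m)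
        = A⁻¹ * (χ y)⁻¹ * χ (x * y) * θ (μ x y) * A * θ n' * (χ y * θ m) := by
      rw [map_mul, map_mul]
      exact comm_aux A (θ n') (χ y) (θ m) (χ (x * y)) (θ (μ x y))
    calc t (φ (x * y)) * ((χ (x * y) : G) * (θ (μ x y * n' * m) : G))
        = t (φ (x * y)) * ((χ (x * y) * θ (μ x y * n' * m) : N) : G) := by push_cast; group
      _ = t (φ (x * y)) * ((A⁻¹ * (χ y)⁻¹ * χ (x * y) * θ (μ x y) * A * θ n'
            * (χ y * θ m) : N) : G) := by rw [keyN]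
      _ = (t (φ (x * y)) * (((A : G))⁻¹ * ((χ y : G))⁻¹ * (χ (x * y) : G) * (θ (μ x y) : G)))
            * (A : G) * (θ n' : G) * ((χ y : G) * (θ m : G)) := by push_cast; group
      _ = (t (φ (x * y)) * (μ (φ x) (φ y) : G))
            * (A : G) * (θ n' : G) * ((χ y : G) * (θ m : G)) := by rw [hP]
      _ = (t (φ x) * t (φ y)) * (A : G) * (θ n' : G) * ((χ y : G) * (θ m : G)) := by rw [hw]
      _ = t (φ x) * ((χ x : G) * (θ n : G)) * (t (φ y) * ((χ y : G) * (θ m : G))) := by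
            rw [hB, hAdef]; push_cast; group
  -- full multiplicativity
  have hmul : ∀ g h : G, f (g * h) = f g * f h := by
    intro g h
    have hk := key (QuotientGroup.mk g) (QuotientGroup.mk h)
      ⟨(t (QuotientGroup.mk g))⁻¹ * g, hmem g⟩ ⟨(t (QuotientGroup.mk h))⁻¹ * h, hmem h⟩
    rw [← hdecomp g, ← hdecomp h] at hk
    exact hk
  have hmkf : ∀ g : G, (QuotientGroup.mk (f g) : G ⧸ N) = φ (QuotientGroup.mk g) := by
    intro g
    rw [hfdef, QuotientGroup.mk_mul, QuotientGroup.mk_mul, hmkn, hmkn, ht, mul_one, mul_one]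
  have hinj : Function.Injective f := by
    intro g h hgh
    have e2 : QuotientGroup.mk g = (QuotientGroup.mk h : G ⧸ N) := by
      apply φ.injective
      rw [← hmkf, ← hmkf, hgh]
    rw [hfdef, hfdef] at hgh
    simp only [e2] at hgh
    have h3 := mul_left_cancel (mul_left_cancel hgh)
    have h4 := θ.injective (Subtype.ext h3)
    have h5 : (t (QuotientGroup.mk h : G ⧸ N))⁻¹ * g
        = (t (QuotientGroup.mk h : G ⧸ N))⁻¹ * h := congrArg Subtype.val h4
    exact mul_left_cancel h5
  have hsurj : Function.Surjective f := by
    intro g'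
    refine ⟨t (φ.symm (QuotientGroup.mk g')) *
      ((θ.symm ((χ (φ.symm (QuotientGroup.mk g')))⁻¹ *
        ⟨(t (QuotientGroup.mk g'))⁻¹ * g', hmem g'⟩) : N) : G), ?_⟩
    rw [hfval, MulEquiv.apply_symm_apply, MulEquiv.apply_symm_apply]
    push_cast
    group
  let F : G →* G := MonoidHom.mk' f hmul
  let γ : G ≃* G := MulEquiv.ofBijective F ⟨hinj, hsurj⟩
  have hγ : ∀ g : G, γ g = f g := fun _ => rfl
  have c1 : ∀ n : N, γ (n : G) = θ n := by
    intro n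
    have : ((n : G)) = t 1 * (n : G) := by rw [ht1, one_mul]
    rw [hγ, this, hfval, map_one, ht1, hχ1, Subgroup.coe_one, one_mul, one_mul]
  refine ⟨γ, c1, ?_, ?_, ?_⟩
  · intro n hn
    rw [show n = ((⟨n, hn⟩ : N) : G) from rfl, c1]
    exact (θ _).2
  · intro g
    rw [hγ]
    exact hmkf g
  · intro x n
    rw [hγ, hfval, mul_assoc]
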